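/- arXiv:0902.1046 — 3 statements merged into one kernel-verified Lean document; each statement's English description precedes it below -/
import Mathlib

section
/- For even x = 2n ≥ 6, ∑_{i=1}^{x/2} g₁(2i) = ∑_{3 ≤ p ≤ x/2, p prime} π₁(x − p) − C(π₁(x/2), 2), where C(m,2) = m(m−1)/2 is the binomial coefficient. -/
open Filter Finset Real Asymptotics

/-- `g1 n` is the number of unordered partitions of `n` into two odd primes:
pairs of odd primes `(p, q)` with `p ≤ q` and `p + q = n`. -/
noncomputable def g1 (n : ℕ) : ℕ :=
  {pq : ℕ × ℕ | pq.1.Prime ∧ Odd pq.1 ∧ pq.2.Prime ∧ Odd pq.2 ∧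
    pq.1 ≤ pq.2 ∧ pq.1 + pq.2 = n}.ncard

/-- `pi1 n` is the number of odd primes `≤ n`. -/
def pi1 (n : ℕ) : ℕ :=
  ((Finset.range (n + 1)).filter (fun p => p.Prime ∧ Odd p)).card

lemma lt_pairs_card (s : Finset ℕ) :
    ((s ×ˢ s).filter (fun pq => pq.2 < pq.1)).card = s.card.choose 2 := by
  set L := (s ×ˢ s).filter (fun pq => pq.2 < pq.1) with hL
  set G := (s ×ˢ s).filter (fun pq => pq.1 < pq.2) with hG
  have hcard : L.card = G.card := by
    apply Finset.card_bij (fun pq _ => (pq.2, pq.1))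
    · rintro ⟨p, q⟩ h
      simp only [hL, hG, mem_filter, mem_product] at h ⊢
      tauto
    · rintro ⟨p, q⟩ h ⟨p', q'⟩ h' e
      simpa [Prod.ext_iff, and_comm] using e
    · rintro ⟨p, q⟩ h
      refine ⟨(q, p), ?_, rfl⟩
      simp only [hL, hG, mem_filter, mem_product] at h ⊢
      tauto
  have hunion : s.offDiag = L ∪ G := by
    ext ⟨p, q⟩
    simp only [Finset.mem_offDiag, hL, hG, mem_union, mem_filter, mem_product]
    constructor
    · rintro ⟨h1, h2, h3⟩
      rcases lt_or_gt_of_ne h3 with h | h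
      · exact Or.inr ⟨⟨h1, h2⟩, h⟩
      · exact Or.inl ⟨⟨h1, h2⟩, h⟩
    · rintro (⟨⟨h1, h2⟩, h⟩ | ⟨⟨h1, h2⟩, h⟩) <;> exact ⟨h1, h2, by omega⟩
  have hdisj : Disjoint L G := by
    rw [Finset.disjoint_left]
    rintro ⟨p, q⟩ h h'
    simp only [hL, hG, mem_filter] at h h'
    omega
  have h1 : L.card + G.card = s.card * s.card - s.card := by
    rw [← Finset.card_union_of_disjoint hdisj, ← hunion, Finset.offDiag_card]
  have h2 : 2 * s.card.choose 2 = s.card * (s.card - 1) := by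
    rw [Nat.choose_two_right]
    rcases Nat.eq_zero_or_pos s.card with h | h
    · simp [h]
    · obtain ⟨m, hm⟩ : ∃ m, s.card = m + 1 := ⟨s.card - 1, by omega⟩
      rw [hm]
      simp only [Nat.add_sub_cancel]
      rw [Nat.mul_comm (m + 1) m]
      exact Nat.two_mul_div_two_of_even (Nat.even_mul_succ_self m)
  have h3 : s.card * (s.card - 1) = s.card * s.card - s.card := by
    rw [Nat.mul_sub, mul_one]
  omega

lemma g1_eq (n N : ℕ) (h : n ≤ N) :
    g1 n = (((Finset.range (N + 1)) ×ˢ (Finset.range (N + 1))).filter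
      (fun pq => pq.1.Prime ∧ Odd pq.1 ∧ pq.2.Prime ∧ Odd pq.2 ∧
        pq.1 ≤ pq.2 ∧ pq.1 + pq.2 = n)).card := by
  rw [g1, ← Set.ncard_coe_finset]
  congr 1
  ext ⟨p, q⟩
  simp only [Set.mem_setOf_eq, Finset.coe_filter, Finset.mem_product, Finset.mem_range,
    Set.mem_setOf_eq]
  constructor
  · rintro ⟨hp, hop, hq, hoq, hle, hsum⟩
    exact ⟨⟨by omega, by omega⟩, hp, hop, hq, hoq, hle, hsum⟩
  · tauto

lemma odd_prime_three_le {p : ℕ} (hp : p.Prime) (ho : Odd p) : 3 ≤ p := by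
  have h2 := hp.two_le
  have := Nat.odd_iff.mp ho
  omega

theorem goldbach_partial_sums_identity (x : ℕ) (hx : Even x) (hx6 : 6 ≤ x) :
    (∑ i ∈ Finset.Icc 1 (x / 2), (g1 (2 * i) : ℤ)) =
      (∑ p ∈ (Finset.Icc 3 (x / 2)).filter Nat.Prime, (pi1 (x - p) : ℤ)) -
        (Nat.choose (pi1 (x / 2)) 2 : ℤ) := by
  classical
  have hx2 : x % 2 = 0 := Nat.even_iff.mp hx
  set R := (Finset.range (x + 1)) ×ˢ (Finset.range (x + 1)) with hR
  set T := R.filter (fun pq => pq.1.Prime ∧ Odd pq.1 ∧ pq.2.Prime ∧ Odd pq.2 ∧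
    pq.1 ≤ pq.2 ∧ pq.1 + pq.2 ≤ x) with hT
  set A := R.filter (fun pq => pq.1.Prime ∧ Odd pq.1 ∧ pq.2.Prime ∧ Odd pq.2 ∧
    pq.1 ≤ x / 2 ∧ pq.1 + pq.2 ≤ x) with hA
  set B := R.filter (fun pq => pq.1.Prime ∧ Odd pq.1 ∧ pq.2.Prime ∧ Odd pq.2 ∧
    pq.1 ≤ x / 2 ∧ pq.2 < pq.1) with hB
  -- LHS
  have hLHS : ∑ i ∈ Finset.Icc 1 (x / 2), g1 (2 * i) = T.card := by
    rw [Finset.card_eq_sum_card_fiberwise (f := fun pq => (pq.1 + pq.2) / 2)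
      (t := Finset.Icc 1 (x / 2)) ?_]
    · apply Finset.sum_congr rfl
      intro i hi
      rw [Finset.mem_Icc] at hi
      rw [g1_eq (2 * i) x (by omega), hT, Finset.filter_filter]
      congr 1
      rw [← hR]
      apply Finset.filter_congr
      rintro ⟨p, q⟩ _
      constructor
      · rintro ⟨hp, ho, hq, hoq, hle, hsum⟩
        have h1 := Nat.odd_iff.mp ho
        have h2 := Nat.odd_iff.mp hoq
        exact ⟨⟨hp, ho, hq, hoq, hle, by omega⟩, by simp; omega⟩
      · rintro ⟨⟨hp, ho, hq, hoq, hle, hle2⟩, hdiv⟩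
        have h1 := Nat.odd_iff.mp ho
        have h2 := Nat.odd_iff.mp hoq
        simp at hdiv
        exact ⟨hp, ho, hq, hoq, hle, by omega⟩
    · rintro ⟨p, q⟩ hmem
      simp only [hT, Finset.mem_coe, Finset.mem_filter] at hmem
      obtain ⟨_, hp, ho, hq, hoq, hle, hsum⟩ := hmem
      have h3p := odd_prime_three_le hp ho
      have h3q := odd_prime_three_le hq hoq
      have h1 := Nat.odd_iff.mp ho
      have h2 := Nat.odd_iff.mp hoq
      rw [Finset.mem_coe, Finset.mem_Icc]
      dsimp only
      omega
  -- first RHS sum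
  have hA1 : A.card = ∑ p ∈ (Finset.Icc 3 (x / 2)).filter Nat.Prime, pi1 (x - p) := by
    rw [Finset.card_eq_sum_card_fiberwise (f := Prod.fst)
      (t := (Finset.Icc 3 (x / 2)).filter Nat.Prime) ?_]
    · apply Finset.sum_congr rfl
      intro p hp
      rw [Finset.mem_filter, Finset.mem_Icc] at hp
      obtain ⟨⟨h3p, hpx⟩, hpp⟩ := hp
      have hop : Odd p := hpp.odd_of_ne_two (by omega)
      rw [pi1]
      apply Finset.card_bij (fun pq _ => pq.2)
      · rintro ⟨p', q⟩ h
        rw [Finset.mem_filter, hA, Finset.mem_filter, hR, Finset.mem_product] at h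
        obtain ⟨⟨_, _, _, hq, hoq, hple, hsum⟩, hfst⟩ := h
        simp only [Finset.mem_filter, Finset.mem_range]
        simp only at hfst
        subst hfst
        exact ⟨by omega, hq, hoq⟩
      · rintro ⟨p1, q1⟩ h1 ⟨p2, q2⟩ h2 e
        rw [Finset.mem_filter] at h1 h2
        simp only at h1 h2 e
        simp [Prod.ext_iff, h1.2, h2.2, e]
      · rintro q hq
        rw [Finset.mem_filter, Finset.mem_range] at hq
        obtain ⟨hqr, hqp, hqo⟩ := hq
        refine ⟨(p, q), ?_, rfl⟩
        rw [Finset.mem_filter, hA, Finset.mem_filter, hR, Finset.mem_product]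
        simp only [Finset.mem_range]
        exact ⟨⟨⟨by omega, by omega⟩, hpp, hop, hqp, hqo, by omega, by omega⟩, by simp⟩
    · rintro ⟨p, q⟩ hmem
      rw [hA, Finset.mem_coe, Finset.mem_filter] at hmem
      obtain ⟨_, hp, ho, hq, hoq, hpx, hsum⟩ := hmem
      have h3p := odd_prime_three_le hp ho
      rw [Finset.mem_coe, Finset.mem_filter, Finset.mem_Icc]
      exact ⟨⟨h3p, hpx⟩, hp⟩
  -- B count
  have hB1 : B.card = (pi1 (x / 2)).choose 2 := by
    rw [pi1, ← lt_pairs_card]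
    congr 1
    ext ⟨p, q⟩
    rw [hB, Finset.mem_filter, hR, Finset.mem_product, Finset.mem_filter,
      Finset.mem_product, Finset.mem_filter, Finset.mem_filter]
    simp only [Finset.mem_range]
    constructor
    · rintro ⟨⟨_, _⟩, hp, ho, hq, hoq, hpx, hlt⟩
      exact ⟨⟨⟨by omega, hp, ho⟩, by omega, hq, hoq⟩, hlt⟩
    · rintro ⟨⟨⟨hp1, hp, ho⟩, hq1, hq, hoq⟩, hlt⟩
      exact ⟨⟨by omega, by omega⟩, hp, ho, hq, hoq, by omega, hlt⟩
  -- split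
  have hsplit : A.card = T.card + B.card := by
    rw [← Finset.card_filter_add_card_filter_not (s := A) (p := fun pq => pq.1 ≤ pq.2)]
    congr 1
    · rw [hA, Finset.filter_filter, hT]
      congr 1
      apply Finset.filter_congr
      rintro ⟨p, q⟩ _
      constructor
      · rintro ⟨⟨hp, ho, hq, hoq, hpx, hsum⟩, hle⟩
        exact ⟨hp, ho, hq, hoq, hle, hsum⟩
      · rintro ⟨hp, ho, hq, hoq, hle, hsum⟩
        exact ⟨⟨hp, ho, hq, hoq, by omega, hsum⟩, hle⟩
    · rw [hA, Finset.filter_filter, hB]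
      congr 1
      apply Finset.filter_congr
      rintro ⟨p, q⟩ _
      constructor
      · rintro ⟨⟨hp, ho, hq, hoq, hpx, hsum⟩, hle⟩
        simp only [not_le] at hle
        exact ⟨hp, ho, hq, hoq, hpx, hle⟩
      · rintro ⟨hp, ho, hq, hoq, hpx, hlt⟩
        exact ⟨⟨hp, ho, hq, hoq, hpx, by omega⟩, by simp; omega⟩
  -- assemble
  have e1 : (∑ i ∈ Finset.Icc 1 (x / 2), (g1 (2 * i) : ℤ)) = (T.card : ℤ) := by
    rw [← hLHS]; push_cast; rfl
  have e2 : (∑ p ∈ (Finset.Icc 3 (x / 2)).filter Nat.Prime, (pi1 (x - p) : ℤ))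
      = (A.card : ℤ) := by
    rw [hA1]; push_cast; rfl
  rw [e1, e2, ← hB1]
  omega
end

section
/- Let (a_n) be a sequence of positive reals with 1/a_n = O(1) as n → ∞, and suppose that for some ε > 0 one has ∑_{i=1}^{n} a_i = O(n (ln n)^{1−ε}). Then, as n → ∞, ∑_{i=3}^{n} (ln ln i / ln² i) · i·a_i ~ (ln ln n / ln² n) · ∑_{i=3}^{n} i·a_i. -/
open Filter Finset Real Asymptotics

noncomputable def gg (t : ℝ) : ℝ := Real.log t / t ^ 2

lemma gg_hasDeriv {t : ℝ} (ht : 0 < t) :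
    HasDerivAt gg ((1 - 2 * Real.log t) / t ^ 3) t := by
  have h1 : HasDerivAt Real.log t⁻¹ t := Real.hasDerivAt_log ht.ne'
  have h2 : HasDerivAt (fun x : ℝ => x ^ 2) (2 * t) t := by
    simpa using hasDerivAt_pow 2 t
  have h : HasDerivAt gg ((t⁻¹ * t ^ 2 - Real.log t * (2 * t)) / (t ^ 2) ^ 2) t :=
    h1.div h2 (by positivity)
  convert h using 1
  field_simp

lemma log2_gt_half : (1/2 : ℝ) < Real.log 2 := by
  rw [Real.lt_log_iff_exp_lt (by norm_num)]
  have h := Real.exp_one_lt_d9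
  have h2 : Real.exp (1/2) * Real.exp (1/2) = Real.exp 1 := by
    rw [← Real.exp_add]; norm_num
  nlinarith [Real.exp_pos (1/2 : ℝ)]

lemma log_ge_two {x : ℝ} (hx : 8 ≤ x) : 2 ≤ Real.log x := by
  rw [Real.le_log_iff_exp_le (by linarith)]
  have h := Real.exp_one_lt_d9
  have h2 : Real.exp 2 = Real.exp 1 * Real.exp 1 := by
    rw [← Real.exp_add]; norm_num
  nlinarith [Real.exp_pos (1:ℝ)]

lemma log_gt_one {x : ℝ} (hx : 3 ≤ x) : 1 < Real.log x := by
  rw [Real.lt_log_iff_exp_lt (by linarith)]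
  have := Real.exp_one_lt_d9
  norm_num at this ⊢
  linarith

lemma gg_pos {t : ℝ} (ht : 1 < t) : 0 < gg t :=
  div_pos (Real.log_pos ht) (by positivity)

lemma gg_nonneg {t : ℝ} (ht : 1 ≤ t) : 0 ≤ gg t :=
  div_nonneg (Real.log_nonneg ht) (by positivity)

lemma gg_le_one {t : ℝ} (ht : 1 ≤ t) : gg t ≤ 1 := by
  rw [gg, div_le_one (by positivity)]
  calc Real.log t ≤ t := Real.log_le_self (by linarith)
  _ ≤ t ^ 2 := by nlinarith

lemma gg_mvt {s t : ℝ} (hs : 2 ≤ s) (hst : s ≤ t) :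
    0 ≤ gg s - gg t ∧ gg s - gg t ≤ (t - s) * (2 * Real.log t) / s ^ 3 := by
  rcases eq_or_lt_of_le hst with rfl | hlt
  · simp
  · have hcont : ContinuousOn gg (Set.Icc s t) := by
      apply ContinuousOn.div
      · apply Real.continuousOn_log.mono
        intro x hx
        have : 2 ≤ x := le_trans hs hx.1
        simp only [Set.mem_compl_iff, Set.mem_singleton_iff]
        intro h; rw [h] at this; norm_num at this
      · exact (continuous_pow 2).continuousOn
      · intro x hx
        have : 2 ≤ x := le_trans hs hx.1
        positivity
    obtain ⟨C, hC, hceq⟩ := exists_hasDerivAt_eq_slope gg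
      (fun x => (1 - 2 * Real.log x) / x ^ 3) hlt hcont
      (fun x hx => gg_hasDeriv (by have := hs.trans hx.1.le; linarith))
    have hts : (0:ℝ) < t - s := sub_pos.2 hlt
    have h1 : gg t - gg s = (1 - 2 * Real.log C) / C ^ 3 * (t - s) := by
      rw [hceq, div_mul_cancel₀ _ hts.ne']
    have hkey : gg s - gg t = (2 * Real.log C - 1) / C ^ 3 * (t - s) := by
      have h2 : -((1 - 2 * Real.log C) / C ^ 3 * (t - s))
          = (2 * Real.log C - 1) / C ^ 3 * (t - s) := by ring
      linarith
    have hsC : s < C := hC.1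
    have hCt : C < t := hC.2
    have hC2 : (2:ℝ) ≤ C := by linarith
    have hCpos : (0:ℝ) < C := by linarith
    have hlogC : (1/2:ℝ) < Real.log C :=
      lt_of_lt_of_le log2_gt_half (Real.log_le_log (by norm_num) hC2)
    have hlogCt : Real.log C ≤ Real.log t := Real.log_le_log hCpos hCt.le
    constructor
    · rw [hkey]
      apply mul_nonneg (div_nonneg (by linarith) (by positivity)) hts.le
    · rw [hkey]
      have hdd : (2 * Real.log C - 1) / C ^ 3 ≤ 2 * Real.log t / s ^ 3 := by
        apply div_le_div₀ (by linarith) (by linarith) (by positivity)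
        exact pow_le_pow_left₀ (by linarith) hsC.le 3
      calc (2 * Real.log C - 1) / C ^ 3 * (t - s)
          ≤ 2 * Real.log t / s ^ 3 * (t - s) :=
            mul_le_mul_of_nonneg_right hdd hts.le
        _ = (t - s) * (2 * Real.log t) / s ^ 3 := by ring
set_option maxHeartbeats 2000000 in
theorem stolz_type_lemma (a : ℕ → ℝ) (ha : ∀ n, 0 < a n)
    (hbd : (fun n : ℕ => 1 / a n) =O[atTop] (fun _ : ℕ => (1 : ℝ)))
    (ε : ℝ) (hε : 0 < ε)
    (hsum : (fun n : ℕ => ∑ i ∈ Finset.Icc 1 n, a i) =O[atTop]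
      (fun n : ℕ => (n : ℝ) * (Real.log n) ^ ((1 : ℝ) - ε))) :
    (fun n : ℕ => ∑ i ∈ Finset.Icc 3 n,
        Real.log (Real.log i) / (Real.log i) ^ 2 * ((i : ℝ) * a i)) ~[atTop]
    (fun n : ℕ => Real.log (Real.log n) / (Real.log n) ^ 2 *
        ∑ i ∈ Finset.Icc 3 n, (i : ℝ) * a i) := by
  -- positive lower bound for a
  obtain ⟨B, hB0, hBB⟩ := hbd.exists_pos
  have hB' := hBB.bound
  have hc_ev : ∀ᶠ i : ℕ in atTop, 1/B ≤ a i := by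
    filter_upwards [hB'] with i hi
    have hai := ha i
    have h1 : 1 / a i ≤ B := by
      have h2 := le_trans (le_abs_self _) hi
      rw [Real.norm_eq_abs] at h2
      simpa using h2
    rw [div_le_iff₀ hB0]
    have h3 := (div_le_iff₀ hai).mp h1
    linarith
  obtain ⟨N₁, hN₁⟩ := eventually_atTop.mp hc_ev
  set c : ℝ := 1/B with hcdef
  have hc_pos : 0 < c := by positivity
  -- reduced exponent
  set ε' : ℝ := min ε (1/2) with hε'def
  have hε'pos : 0 < ε' := lt_min hε (by norm_num)
  have hε'le : ε' ≤ 1/2 := min_le_right _ _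
  -- big-O constant
  obtain ⟨C, hC⟩ := Asymptotics.isBigO_iff.mp hsum
  set C₁ : ℝ := max C 1 with hC₁def
  have hC₁pos : (0:ℝ) < C₁ := lt_of_lt_of_le one_pos (le_max_right _ _)
  have hCC₁ : C ≤ C₁ := le_max_left _ _
  have hsum' : ∀ᶠ k : ℕ in atTop,
      ∑ i ∈ Finset.Icc 1 k, a i ≤ C₁ * ((k:ℝ) * Real.log k ^ ((1:ℝ) - ε')) := by
    filter_upwards [hC, eventually_ge_atTop 3] with k hk h3
    have hk3 : (3:ℝ) ≤ (k:ℝ) := by exact_mod_cast h3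
    have hL1 : 1 ≤ Real.log k := (log_gt_one hk3).le
    have hnn : (0:ℝ) ≤ (k:ℝ) * Real.log k ^ ((1:ℝ) - ε) :=
      mul_nonneg (Nat.cast_nonneg _) (Real.rpow_nonneg (by linarith) _)
    calc ∑ i ∈ Finset.Icc 1 k, a i ≤ ‖∑ i ∈ Finset.Icc 1 k, a i‖ := le_abs_self _
      _ ≤ C * ‖(k:ℝ) * Real.log k ^ ((1:ℝ) - ε)‖ := hk
      _ = C * ((k:ℝ) * Real.log k ^ ((1:ℝ) - ε)) := by
          rw [Real.norm_eq_abs, abs_of_nonneg hnn]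
      _ ≤ C₁ * ((k:ℝ) * Real.log k ^ ((1:ℝ) - ε)) :=
          mul_le_mul_of_nonneg_right hCC₁ hnn
      _ ≤ C₁ * ((k:ℝ) * Real.log k ^ ((1:ℝ) - ε')) := by
          apply mul_le_mul_of_nonneg_left _ hC₁pos.le
          apply mul_le_mul_of_nonneg_left _ (Nat.cast_nonneg _)
          exact Real.rpow_le_rpow_of_exponent_le hL1
            (by have := min_le_left ε (1/2); linarith)
  obtain ⟨M, hM⟩ := eventually_atTop.mp hsum'
  -- limit facts
  have hlogN : Tendsto (fun n:ℕ => Real.log n) atTop atTop :=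
    Real.tendsto_log_atTop.comp tendsto_natCast_atTop_atTop
  have hloglogN : Tendsto (fun n:ℕ => Real.log (Real.log n)) atTop atTop :=
    Real.tendsto_log_atTop.comp hlogN
  have h0 : Tendsto (fun x:ℝ => Real.log x / x) atTop (nhds 0) :=
    Real.isLittleO_log_id_atTop.tendsto_div_nhds_zero
  have hratio : Tendsto (fun n:ℕ => Real.log (Real.log n) / Real.log n) atTop (nhds 0) :=
    h0.comp hlogN
  have hgg0 : Tendsto gg atTop (nhds 0) := by
    have h1 : Tendsto (fun x:ℝ => Real.log x / x * x⁻¹) atTop (nhds 0) := by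
      simpa using h0.mul tendsto_inv_atTop_zero
    exact h1.congr (fun x => by rw [gg]; ring)
  have hw0 : Tendsto (fun n:ℕ => gg (Real.log n)) atTop (nhds 0) := hgg0.comp hlogN
  have hNdiv : Tendsto (fun n:ℕ => (n:ℝ) / (2 * Real.log n ^ 2)) atTop atTop := by
    have h2 : Tendsto (fun x:ℝ => Real.log x ^ 2 / x) atTop (nhds 0) := by
      simpa using Real.tendsto_pow_log_div_mul_add_atTop 1 0 2 one_ne_zero
    have h3 : Tendsto (fun x:ℝ => Real.log x ^ 2 / x) atTop (nhdsWithin 0 (Set.Ioi 0)) := by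
      apply tendsto_nhdsWithin_of_tendsto_nhds_of_eventually_within _ h2
      filter_upwards [eventually_gt_atTop (3:ℝ)] with x hx
      have hx1 : 1 < Real.log x := log_gt_one hx.le
      exact Set.mem_Ioi.mpr (div_pos (by positivity) (by linarith))
    have h4 : Tendsto (fun x:ℝ => x / Real.log x ^ 2) atTop atTop := by
      have h5 := h3.inv_tendsto_nhdsGT_zero
      exact h5.congr (fun x => by simp only [Pi.inv_apply]; rw [inv_div])
    have h6 := (h4.atTop_div_const two_pos).comp tendsto_natCast_atTop_atTop
    exact h6.congr (fun n => by simp only [Function.comp_apply]; ring)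
  have hEheadT : Tendsto (fun n:ℕ =>
      Real.log (Real.log n) * Real.log n ^ ((1:ℝ) + ε')) atTop atTop :=
    hloglogN.atTop_mul_atTop₀
      ((tendsto_rpow_atTop (by positivity)).comp hlogN)
  -- small-index floor β
  set β : ℝ := min (min (gg (Real.log 3)) (gg (Real.log 4)))
      (min (gg (Real.log 5)) (min (gg (Real.log 6)) (gg (Real.log 7)))) with hβdef
  have hβpos : 0 < β := by
    apply lt_min (lt_min (gg_pos (log_gt_one (by norm_num))) (gg_pos (log_gt_one (by norm_num))))
    exact lt_min (gg_pos (log_gt_one (by norm_num)))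
      (lt_min (gg_pos (log_gt_one (by norm_num))) (gg_pos (log_gt_one (by norm_num))))
  have hβi : ∀ i : ℕ, 3 ≤ i → i ≤ 7 → β ≤ gg (Real.log i) := by
    intro i h3 h7
    interval_cases i <;> push_cast
    · exact (min_le_left _ _).trans (min_le_left _ _)
    · exact (min_le_left _ _).trans (min_le_right _ _)
    · exact (min_le_right _ _).trans (min_le_left _ _)
    · exact (min_le_right _ _).trans ((min_le_right _ _).trans (min_le_left _ _))
    · exact (min_le_right _ _).trans ((min_le_right _ _).trans (min_le_right _ _))
  -- reduce to little-o
  show ((fun n : ℕ => ∑ i ∈ Finset.Icc 3 n, gg (Real.log i) * ((i : ℝ) * a i)) -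
      fun n : ℕ => gg (Real.log n) * ∑ i ∈ Finset.Icc 3 n, (i : ℝ) * a i) =o[atTop]
      (fun n : ℕ => gg (Real.log n) * ∑ i ∈ Finset.Icc 3 n, (i : ℝ) * a i)
  rw [Asymptotics.isLittleO_iff]
  intro δ hδ
  filter_upwards [hlogN.eventually_ge_atTop 4,
    hloglogN.eventually_ge_atTop (max 1 (Real.log 2)),
    hratio.eventually_lt_const (show (0:ℝ) < 1/8 by norm_num),
    hratio.eventually_lt_const (show (0:ℝ) < δ/96 by positivity),
    hNdiv.eventually_ge_atTop (max 8 (max (M:ℝ) 1)),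
    hEheadT.eventually_ge_atTop (8 * C₁ / (δ * c)),
    hw0.eventually_lt_const hβpos,
    eventually_ge_atTop (max (2*N₁) 8)] with n hL4 hll hr8 hrδ hsp hEh hβn hn8
  -- basic facts about n
  have hn8' : 8 ≤ n := le_trans (le_max_right _ _) hn8
  have hnN₁ : 2*N₁ ≤ n := le_trans (le_max_left _ _) hn8
  have hnR : (8:ℝ) ≤ (n:ℝ) := by exact_mod_cast hn8'
  set L : ℝ := Real.log n with hLdef
  set l : ℝ := Real.log L with hldef
  have hLpos : 0 < L := by linarith
  have hl1 : 1 ≤ l := le_trans (le_max_left _ _) hll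
  have hl2 : Real.log 2 ≤ l := le_trans (le_max_right _ _) hll
  have hlL8 : l < 1/8 * L := (div_lt_iff₀ hLpos).mp hr8
  have h96 : 96 * l ≤ δ * L := by
    have h := (div_lt_iff₀ hLpos).mp hrδ
    have h2 : δ / 96 * L * 96 = δ * L := by ring
    nlinarith [h, h2]
  -- the split point m
  set m : ℕ := Nat.floor ((n:ℝ) / L^2) with hmdef
  have hsp8 : (8:ℝ) ≤ (n:ℝ)/(2*L^2) := le_trans (le_max_left _ _) hsp
  have hspM : ((M:ℕ):ℝ) ≤ (n:ℝ)/(2*L^2) :=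
    le_trans ((le_max_left _ _).trans (le_max_right _ _)) hsp
  have hsp1 : (1:ℝ) ≤ (n:ℝ)/(2*L^2) :=
    le_trans ((le_max_right _ _).trans (le_max_right _ _)) hsp
  have hm_lb : (n:ℝ)/(2*L^2) ≤ (m:ℝ) := by
    have h1 : (n:ℝ)/L^2 - 1 < (m:ℝ) := Nat.sub_one_lt_floor _
    have h2 : (n:ℝ)/L^2 = 2*((n:ℝ)/(2*L^2)) := by field_simp
    linarith
  have hm_ub : (m:ℝ) ≤ (n:ℝ)/L^2 := Nat.floor_le (by positivity)
  have hm8 : 8 ≤ m := by exact_mod_cast le_trans hsp8 hm_lb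
  have hmM : M ≤ m := by exact_mod_cast le_trans hspM hm_lb
  have hmn : m ≤ n := by
    have h1 : (n:ℝ)/L^2 ≤ (n:ℝ) := by
      have hL1 : (1:ℝ) ≤ L := by linarith
      have hL2 : (1:ℝ) ≤ L^2 := by
        have := pow_le_pow_left₀ (by norm_num : (0:ℝ) ≤ 1) hL1 2
        simpa using this
      rw [div_le_iff₀ (by positivity)]
      linarith [mul_le_mul_of_nonneg_left hL2 (show (0:ℝ) ≤ (n:ℝ) from Nat.cast_nonneg n)]
    exact_mod_cast le_trans hm_ub h1
  have hm0R : (0:ℝ) < (m:ℝ) := by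
    have : 0 < m := by omega
    exact_mod_cast this
  have hm3R : (3:ℝ) ≤ (m:ℝ) := by
    have : 3 ≤ m := by omega
    exact_mod_cast this
  -- logs of m
  have h2L : Real.log ((n:ℝ)/(2*L^2)) = L - (Real.log 2 + 2*l) := by
    rw [Real.log_div (by positivity) (by positivity),
      Real.log_mul (by norm_num) (by positivity), Real.log_pow]
    push_cast
    ring
  have hlogm_ge : L - (Real.log 2 + 2*l) ≤ Real.log m := by
    rw [← h2L]
    exact Real.log_le_log (by positivity) hm_lb
  have hlogm_lb : L/2 ≤ Real.log m := by linarith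
  have hlogm_ub : Real.log m ≤ L := by
    apply Real.log_le_log hm0R
    exact_mod_cast hmn
  have hLm3 : L - Real.log m ≤ 3*l := by linarith
  have hlogm2 : 2 ≤ Real.log m := by linarith
  -- the sum S and its lower bound
  set S : ℝ := ∑ i ∈ Finset.Icc 3 n, (i:ℝ) * a i with hSdef
  have hterm : ∀ i : ℕ, 0 ≤ (i:ℝ) * a i :=
    fun i => mul_nonneg (Nat.cast_nonneg _) (ha i).le
  have hS_nonneg : 0 ≤ S := Finset.sum_nonneg fun i _ => hterm i
  have hS_lb : c/4 * (n:ℝ)^2 ≤ S := by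
    have hsub : Finset.Icc (n/2+1) n ⊆ Finset.Icc 3 n := by
      intro i hi
      rw [Finset.mem_Icc] at *
      omega
    have hterm_lb : ∀ i ∈ Finset.Icc (n/2+1) n, (n:ℝ)/2 * c ≤ (i:ℝ) * a i := by
      intro i hi
      rw [Finset.mem_Icc] at hi
      have hiN : N₁ ≤ i := by omega
      have hia : c ≤ a i := hN₁ i hiN
      have hiR : (n:ℝ)/2 ≤ (i:ℝ) := by
        have h2i : n ≤ 2*i := by omega
        have := (Nat.cast_le (α := ℝ)).mpr h2i
        push_cast at this
        linarith
      exact mul_le_mul hiR hia hc_pos.le (Nat.cast_nonneg _)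
    have hcard : (n:ℝ)/2 ≤ ((Finset.Icc (n/2+1) n).card : ℝ) := by
      rw [Nat.card_Icc]
      have e : n + 1 - (n/2+1) = n - n/2 := by omega
      rw [e]
      have h2k : n ≤ 2*(n - n/2) := by omega
      have := (Nat.cast_le (α := ℝ)).mpr h2k
      push_cast at this
      linarith
    calc c/4 * (n:ℝ)^2 = ((n:ℝ)/2) * ((n:ℝ)/2 * c) := by ring
      _ ≤ ((Finset.Icc (n/2+1) n).card : ℝ) * ((n:ℝ)/2 * c) :=
          mul_le_mul_of_nonneg_right hcard (by positivity)
      _ ≤ ∑ i ∈ Finset.Icc (n/2+1) n, (i:ℝ) * a i := by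
          have := Finset.card_nsmul_le_sum (Finset.Icc (n/2+1) n)
            (fun i => (i:ℝ) * a i) ((n:ℝ)/2 * c) hterm_lb
          simpa [nsmul_eq_mul] using this
      _ ≤ S := Finset.sum_le_sum_of_subset_of_nonneg hsub (fun i _ _ => hterm i)
  have hggL : gg L = l / L^2 := rfl
  have hggL_nonneg : 0 ≤ gg L := gg_nonneg (by linarith)
  have hG_nonneg : 0 ≤ gg L * S := mul_nonneg hggL_nonneg hS_nonneg
  -- rewrite difference as a single sum
  simp only [Pi.sub_apply]
  have h_eq : (∑ i ∈ Finset.Icc 3 n, gg (Real.log i) * ((i:ℝ) * a i)) - gg L * S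
      = ∑ i ∈ Finset.Icc 3 n, (gg (Real.log i) - gg L) * ((i:ℝ) * a i) := by
    rw [hSdef, Finset.mul_sum, ← Finset.sum_sub_distrib]
    exact Finset.sum_congr rfl (fun i _ => by ring)
  have hD_nonneg : 0 ≤ ∑ i ∈ Finset.Icc 3 n, (gg (Real.log i) - gg L) * ((i:ℝ) * a i) := by
    apply Finset.sum_nonneg
    intro i hi
    rw [Finset.mem_Icc] at hi
    apply mul_nonneg _ (hterm i)
    rw [sub_nonneg]
    by_cases h7 : i ≤ 7
    · exact le_trans hβn.le (hβi i hi.1 h7)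
    · have h8 : (8:ℝ) ≤ (i:ℝ) := by exact_mod_cast (by omega : 8 ≤ i)
      have hin : Real.log i ≤ L := Real.log_le_log (by linarith)
        (by exact_mod_cast hi.2)
      linarith [(gg_mvt (log_ge_two h8) hin).1]
  -- split the sum
  have hset1 : Finset.Icc 3 n = Finset.Ioc 2 n := by
    ext x; simp only [Finset.mem_Icc, Finset.mem_Ioc]; omega
  have hset2 : Finset.Icc 3 m = Finset.Ioc 2 m := by
    ext x; simp only [Finset.mem_Icc, Finset.mem_Ioc]; omega
  have hsplit : ∑ i ∈ Finset.Icc 3 n, (gg (Real.log i) - gg L) * ((i:ℝ) * a i)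
      = (∑ i ∈ Finset.Icc 3 m, (gg (Real.log i) - gg L) * ((i:ℝ) * a i))
      + ∑ i ∈ Finset.Ioc m n, (gg (Real.log i) - gg L) * ((i:ℝ) * a i) := by
    rw [hset1, hset2]
    exact (Finset.sum_Ioc_consecutive _ (by omega) hmn).symm
  -- head bound
  have hhead : ∑ i ∈ Finset.Icc 3 m, (gg (Real.log i) - gg L) * ((i:ℝ) * a i)
      ≤ δ/2 * (gg L * S) := by
    have step1 : ∑ i ∈ Finset.Icc 3 m, (gg (Real.log i) - gg L) * ((i:ℝ) * a i)
        ≤ ∑ i ∈ Finset.Icc 3 m, (m:ℝ) * a i := by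
      apply Finset.sum_le_sum
      intro i hi
      rw [Finset.mem_Icc] at hi
      have h3i : (3:ℝ) ≤ (i:ℝ) := by exact_mod_cast hi.1
      have hgg1 : gg (Real.log i) ≤ 1 := gg_le_one (log_gt_one h3i).le
      have hone : gg (Real.log i) - gg L ≤ 1 := by linarith
      calc (gg (Real.log i) - gg L) * ((i:ℝ) * a i)
          ≤ 1 * ((i:ℝ) * a i) := mul_le_mul_of_nonneg_right hone (hterm i)
        _ = (i:ℝ) * a i := one_mul _
        _ ≤ (m:ℝ) * a i := mul_le_mul_of_nonneg_right
            (by exact_mod_cast hi.2) (ha i).le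
    have step2 : ∑ i ∈ Finset.Icc 3 m, (m:ℝ) * a i
        ≤ (m:ℝ) * (C₁ * ((m:ℝ) * Real.log m ^ ((1:ℝ) - ε'))) := by
      rw [← Finset.mul_sum]
      apply mul_le_mul_of_nonneg_left _ (Nat.cast_nonneg _)
      calc ∑ i ∈ Finset.Icc 3 m, a i ≤ ∑ i ∈ Finset.Icc 1 m, a i :=
            Finset.sum_le_sum_of_subset_of_nonneg
              (Finset.Icc_subset_Icc_left (by omega)) (fun i _ _ => (ha i).le)
        _ ≤ C₁ * ((m:ℝ) * Real.log m ^ ((1:ℝ) - ε')) := hM m hmM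
    have step3 : (m:ℝ) * (C₁ * ((m:ℝ) * Real.log m ^ ((1:ℝ) - ε')))
        ≤ C₁ * (((n:ℝ)/L^2)^2 * L ^ ((1:ℝ) - ε')) := by
      have hrp : Real.log m ^ ((1:ℝ) - ε') ≤ L ^ ((1:ℝ) - ε') :=
        Real.rpow_le_rpow (by linarith) hlogm_ub (by linarith)
      calc (m:ℝ) * (C₁ * ((m:ℝ) * Real.log m ^ ((1:ℝ) - ε')))
          = C₁ * (((m:ℝ) * (m:ℝ)) * Real.log m ^ ((1:ℝ) - ε')) := by ring
        _ ≤ C₁ * ((((n:ℝ)/L^2) * ((n:ℝ)/L^2)) * L ^ ((1:ℝ) - ε')) := by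
            apply mul_le_mul_of_nonneg_left _ hC₁pos.le
            apply mul_le_mul (mul_le_mul hm_ub hm_ub (Nat.cast_nonneg _) (by positivity))
              hrp (Real.rpow_nonneg (by linarith) _) (by positivity)
        _ = C₁ * (((n:ℝ)/L^2)^2 * L ^ ((1:ℝ) - ε')) := by ring
    have hC₁' : C₁ ≤ δ*c/8 * (l * L ^ ((1:ℝ) + ε')) := by
      rw [div_le_iff₀ (by positivity)] at hEh
      linarith
    have hAB : L ^ ((1:ℝ) - ε') * L ^ ((1:ℝ) + ε') = L^2 := by
      rw [← Real.rpow_add hLpos, show (1:ℝ) - ε' + ((1:ℝ) + ε') = ((2:ℕ):ℝ) by push_cast; ring,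
        Real.rpow_natCast]
    have step4 : C₁ * (((n:ℝ)/L^2)^2 * L ^ ((1:ℝ) - ε'))
        ≤ δ/2 * (gg L * (c/4 * (n:ℝ)^2)) := by
      calc C₁ * (((n:ℝ)/L^2)^2 * L ^ ((1:ℝ) - ε'))
          ≤ (δ*c/8 * (l * L ^ ((1:ℝ) + ε'))) * (((n:ℝ)/L^2)^2 * L ^ ((1:ℝ) - ε')) := by
            apply mul_le_mul_of_nonneg_right hC₁'
            exact mul_nonneg (by positivity) (Real.rpow_nonneg (by linarith) _)
        _ = δ*c/8 * l * ((n:ℝ)^2/L^4) * (L ^ ((1:ℝ) - ε') * L ^ ((1:ℝ) + ε')) := by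
            ring
        _ = δ*c/8 * l * ((n:ℝ)^2/L^4) * L^2 := by rw [hAB]
        _ = δ/2 * ((l/L^2) * (c/4 * (n:ℝ)^2)) := by field_simp; ring
        _ = δ/2 * (gg L * (c/4 * (n:ℝ)^2)) := by rw [hggL]
    have step5 : δ/2 * (gg L * (c/4 * (n:ℝ)^2)) ≤ δ/2 * (gg L * S) := by
      apply mul_le_mul_of_nonneg_left _ (by positivity)
      exact mul_le_mul_of_nonneg_left hS_lb hggL_nonneg
    linarith
  -- tail bound
  have htail : ∑ i ∈ Finset.Ioc m n, (gg (Real.log i) - gg L) * ((i:ℝ) * a i)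
      ≤ δ/2 * (gg L * S) := by
    have hwm := gg_mvt hlogm2 hlogm_ub
    have step1 : ∑ i ∈ Finset.Ioc m n, (gg (Real.log i) - gg L) * ((i:ℝ) * a i)
        ≤ (gg (Real.log m) - gg L) * ∑ i ∈ Finset.Ioc m n, (i:ℝ) * a i := by
      rw [Finset.mul_sum]
      apply Finset.sum_le_sum
      intro i hi
      rw [Finset.mem_Ioc] at hi
      have h1 : Real.log m ≤ Real.log i :=
        Real.log_le_log hm0R (by exact_mod_cast hi.1.le)
      have := (gg_mvt hlogm2 h1).1
      exact mul_le_mul_of_nonneg_right (by linarith) (hterm i)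
    have step2 : ∑ i ∈ Finset.Ioc m n, (i:ℝ) * a i ≤ S := by
      apply Finset.sum_le_sum_of_subset_of_nonneg _ (fun i _ _ => hterm i)
      intro i hi
      rw [Finset.mem_Ioc] at hi
      rw [Finset.mem_Icc]
      omega
    have hdiff : gg (Real.log m) - gg L ≤ δ/2 * (l/L^2) := by
      have h2 := hwm.2
      have h3 : (L - Real.log m) * (2 * l) / (Real.log m)^3
          ≤ (3*l) * (2*l) / ((L/2)^3) := by
        apply div_le_div₀ (by positivity)
          (mul_le_mul_of_nonneg_right hLm3 (by linarith)) (by positivity)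
        exact pow_le_pow_left₀ (by positivity) hlogm_lb 3
      have h4 : (3*l) * (2*l) / ((L/2)^3) ≤ δ/2 * (l/L^2) := by
        rw [show δ/2 * (l/L^2) = (δ*l)/(2*L^2) by ring,
          div_le_div_iff₀ (by positivity) (by positivity)]
        have hkey := mul_le_mul_of_nonneg_left h96
          (show (0:ℝ) ≤ l*L^2/8 by positivity)
        have e1 : l*L^2/8*(96*l) = (3*l)*(2*l)*(2*L^2) := by ring
        have e2 : l*L^2/8*(δ*L) = δ*l*((L/2)^3) := by ring
        linarith [hkey, e1, e2]
      have hlogLm : Real.log L = l := rfl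
      calc gg (Real.log m) - gg L ≤ (L - Real.log m) * (2 * Real.log L) / (Real.log m)^3 := h2
        _ = (L - Real.log m) * (2 * l) / (Real.log m)^3 := by rw [hlogLm]
        _ ≤ (3*l) * (2*l) / ((L/2)^3) := h3
        _ ≤ δ/2 * (l/L^2) := h4
    calc ∑ i ∈ Finset.Ioc m n, (gg (Real.log i) - gg L) * ((i:ℝ) * a i)
        ≤ (gg (Real.log m) - gg L) * ∑ i ∈ Finset.Ioc m n, (i:ℝ) * a i := step1
      _ ≤ (gg (Real.log m) - gg L) * S := by
          apply mul_le_mul_of_nonneg_left step2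
          linarith [(gg_mvt hlogm2 hlogm_ub).1]
      _ ≤ (δ/2 * (l/L^2)) * S := mul_le_mul_of_nonneg_right hdiff hS_nonneg
      _ = δ/2 * (gg L * S) := by rw [hggL]; ring
  -- finish
  rw [h_eq, Real.norm_eq_abs, Real.norm_eq_abs, abs_of_nonneg hD_nonneg,
    abs_of_nonneg hG_nonneg, hsplit]
  linarith
end

section
/- For x ≡ 1 (mod 4), ∑_{i=0}^{(x−1)/4} q(4i+1) = ∑_{k=1}^{⌊(1+√x)/2⌋} ⌊(1 + √(2x − (2k−1)²))/2⌋ − C(⌊(1+√x)/2⌋, 2), where C(m,2) = m(m−1)/2 is the binomial coefficient; consequently, as x → ∞ through x ≡ 1 (mod 4), ∑_{i=0}^{(x−1)/4} q(4i+1) = (π/16)·x + O(√x). -/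
open Filter Finset Real Asymptotics

/-- `twoSquaresQ n` is the number of unordered representations of `n` as a sum of two
squares of nonnegative integers: pairs `(a, b)` with `a ≤ b` and `a² + b² = n`. -/
noncomputable def twoSquaresQ (n : ℕ) : ℕ :=
  {ab : ℕ × ℕ | ab.1 ≤ ab.2 ∧ ab.1 ^ 2 + ab.2 ^ 2 = n}.ncard

private lemma sq_mod4 (a b : ℕ) :
    (a ^ 2 + b ^ 2) % 4 = 1 ↔ (a + b) % 2 = 1 := by
  rcases Nat.even_or_odd a with ⟨k, hk⟩ | ⟨k, hk⟩ <;>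
    rcases Nat.even_or_odd b with ⟨l, hl⟩ | ⟨l, hl⟩ <;>
      subst hk <;> subst hl <;> ring_nf <;> omega

private lemma le_floor_iff_sq (m k : ℕ) (hk : 1 ≤ k) :
    k ≤ ⌊(1 + Real.sqrt m) / 2⌋₊ ↔ (2 * k - 1) ^ 2 ≤ m := by
  have hk' : (1 : ℝ) ≤ (k : ℝ) := by exact_mod_cast hk
  have h0 : (0 : ℝ) ≤ 2 * (k : ℝ) - 1 := by linarith
  have hcast : ((2 * k - 1 : ℕ) : ℝ) = 2 * (k : ℝ) - 1 := by
    have h2 : 1 ≤ 2 * k := by omega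
    push_cast [h2]; ring
  rw [Nat.le_floor_iff (by positivity)]
  constructor
  · intro h
    have h1 : 2 * (k : ℝ) - 1 ≤ Real.sqrt m := by linarith
    have h2 : (2 * (k : ℝ) - 1) ^ 2 ≤ (m : ℝ) :=
      (Real.le_sqrt h0 (by positivity)).mp h1
    rw [← hcast] at h2
    exact_mod_cast h2
  · intro h
    have h2 : (2 * (k : ℝ) - 1) ^ 2 ≤ (m : ℝ) := by
      rw [← hcast]; exact_mod_cast h
    have h1 : 2 * (k : ℝ) - 1 ≤ Real.sqrt m := (Real.le_sqrt h0 (by positivity)).mpr h2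
    linarith

private lemma card_odd_sq_le (m : ℕ) :
    #{v ∈ Finset.range (m + 1) | v ^ 2 ≤ m ∧ v % 2 = 1}
      = ⌊(1 + Real.sqrt m) / 2⌋₊ := by
  rw [show ⌊(1 + Real.sqrt m) / 2⌋₊ =
      #(Finset.Icc 1 ⌊(1 + Real.sqrt m) / 2⌋₊) by rw [Nat.card_Icc]; omega]
  apply Finset.card_nbij' (fun v => (v + 1) / 2) (fun k => 2 * k - 1)
  · intro v hv
    simp only [Finset.mem_coe, Finset.mem_filter, Finset.mem_range] at hv
    obtain ⟨hv1, hv2, hv3⟩ := hv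
    have h1 : 1 ≤ (v + 1) / 2 := by omega
    rw [Finset.mem_coe, Finset.mem_Icc]
    refine ⟨h1, ?_⟩
    rw [le_floor_iff_sq _ _ h1]
    have : 2 * ((v + 1) / 2) - 1 = v := by omega
    rw [this]; exact hv2
  · intro k hk
    rw [Finset.mem_coe, Finset.mem_Icc] at hk
    obtain ⟨hk1, hk2⟩ := hk
    rw [le_floor_iff_sq _ _ hk1] at hk2
    simp only [Finset.mem_coe, Finset.mem_filter, Finset.mem_range]
    have hle : 2 * k - 1 ≤ (2 * k - 1) ^ 2 := Nat.le_self_pow (by norm_num) _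
    exact ⟨by omega, hk2, by omega⟩
  · intro v hv
    simp only [Finset.mem_coe, Finset.mem_filter, Finset.mem_range] at hv
    dsimp only; omega
  · intro k hk
    rw [Finset.mem_coe, Finset.mem_Icc] at hk
    dsimp only; omega

private lemma twoSquaresQ_eq_card {n m : ℕ} (h : n ≤ m) :
    twoSquaresQ n = #{p ∈ Finset.range (m + 1) ×ˢ Finset.range (m + 1) |
      p.1 ≤ p.2 ∧ p.1 ^ 2 + p.2 ^ 2 = n} := by
  rw [twoSquaresQ, ← Set.ncard_coe_finset]
  congr 1
  ext ⟨a, b⟩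
  simp only [Set.mem_setOf_eq, Finset.coe_filter, Finset.mem_product, Finset.mem_range]
  constructor
  · rintro ⟨hab, hs⟩
    have ha : a ≤ a ^ 2 := Nat.le_self_pow (by norm_num) _
    have hb : b ≤ b ^ 2 := Nat.le_self_pow (by norm_num) _
    exact ⟨⟨by omega, by omega⟩, hab, hs⟩
  · tauto

private lemma sum_twoSquaresQ (x : ℕ) (hx : x % 4 = 1) :
    ∑ i ∈ Finset.range ((x - 1) / 4 + 1), twoSquaresQ (4 * i + 1)
      = #{p ∈ Finset.range (x + 1) ×ˢ Finset.range (x + 1) |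
          p.1 ≤ p.2 ∧ p.1 ^ 2 + p.2 ^ 2 ≤ x ∧ (p.1 ^ 2 + p.2 ^ 2) % 4 = 1} := by
  have hsum : ∀ i ∈ Finset.range ((x - 1) / 4 + 1),
      twoSquaresQ (4 * i + 1) = #{p ∈ Finset.range (x + 1) ×ˢ Finset.range (x + 1) |
        p.1 ≤ p.2 ∧ p.1 ^ 2 + p.2 ^ 2 = 4 * i + 1} := by
    intro i hi
    rw [Finset.mem_range] at hi
    exact twoSquaresQ_eq_card (by omega)
  rw [Finset.sum_congr rfl hsum]
  rw [← Finset.card_biUnion]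
  · congr 1
    ext ⟨a, b⟩
    simp only [Finset.mem_biUnion, Finset.mem_filter, Finset.mem_product, Finset.mem_range]
    constructor
    · rintro ⟨i, hi, ⟨hbox, hab, hs⟩⟩
      exact ⟨hbox, hab, by omega, by omega⟩
    · rintro ⟨hbox, hab, hs1, hs2⟩
      exact ⟨(a ^ 2 + b ^ 2) / 4, by omega, hbox, hab, by omega⟩
  · intro i _ j _ hij
    rw [Function.onFun, Finset.disjoint_left]
    rintro ⟨a, b⟩ ha hb
    simp only [Finset.mem_filter] at ha hb
    omega

private lemma card_T_eq_card_U (x : ℕ) :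
    #{p ∈ Finset.range (x + 1) ×ˢ Finset.range (x + 1) |
        p.1 ≤ p.2 ∧ p.1 ^ 2 + p.2 ^ 2 ≤ x ∧ (p.1 ^ 2 + p.2 ^ 2) % 4 = 1}
      = #{p ∈ Finset.range (2 * x + 1) ×ˢ Finset.range (2 * x + 1) |
        p.1 ≤ p.2 ∧ p.1 % 2 = 1 ∧ p.2 % 2 = 1 ∧ p.1 ^ 2 + p.2 ^ 2 ≤ 2 * x} := by
  apply Finset.card_nbij' (fun p => (p.2 - p.1, p.1 + p.2))
    (fun q => ((q.2 - q.1) / 2, (q.2 + q.1) / 2))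
  · rintro ⟨a, b⟩ hp
    simp only [Finset.mem_coe, Finset.mem_filter, Finset.mem_product, Finset.mem_range] at hp ⊢
    obtain ⟨⟨hax, hbx⟩, hab, hs, hm⟩ := hp
    have hpar : (a + b) % 2 = 1 := (sq_mod4 a b).mp hm
    have hkey : (b - a) ^ 2 + (a + b) ^ 2 = 2 * (a ^ 2 + b ^ 2) := by
      zify [hab]; ring
    refine ⟨⟨by omega, by omega⟩, by omega, by omega, by omega, by omega⟩
  · rintro ⟨u, v⟩ hq
    simp only [Finset.mem_coe, Finset.mem_filter, Finset.mem_product, Finset.mem_range] at hq ⊢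
    obtain ⟨⟨hux, hvx⟩, huv, hu2, hv2, hs⟩ := hq
    obtain ⟨c, hc⟩ : ∃ c, v - u = 2 * c := ⟨(v - u) / 2, by omega⟩
    obtain ⟨d, hd⟩ : ∃ d, v + u = 2 * d := ⟨(v + u) / 2, by omega⟩
    have hkey : 2 * (c ^ 2 + d ^ 2) = u ^ 2 + v ^ 2 := by
      have h1 : d = u + c := by omega
      have h2 : v = u + 2 * c := by omega
      subst h1 h2; ring
    have hcd : c ≤ d := by nlinarith [hc, hd]
    have hcx : c ^ 2 + d ^ 2 ≤ x := by omega
    have hc1 : c ≤ c ^ 2 := Nat.le_self_pow (by norm_num) _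
    have hd1 : d ≤ d ^ 2 := Nat.le_self_pow (by norm_num) _
    have hmod : (c + d) % 2 = 1 := by omega
    rw [hc, hd]
    have e1 : 2 * c / 2 = c := by omega
    have e2 : 2 * d / 2 = d := by omega
    rw [e1, e2]
    exact ⟨⟨by omega, by omega⟩, by omega, hcx, (sq_mod4 c d).mpr hmod⟩
  · rintro ⟨a, b⟩ hp
    simp only [Finset.mem_coe, Finset.mem_filter, Finset.mem_product, Finset.mem_range] at hp
    obtain ⟨_, hab, _⟩ := hp
    simp only [Prod.mk.injEq]
    omega
  · rintro ⟨u, v⟩ hq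
    simp only [Finset.mem_coe, Finset.mem_filter, Finset.mem_product, Finset.mem_range] at hq
    obtain ⟨_, huv, hu2, hv2, _⟩ := hq
    simp only [Prod.mk.injEq]
    omega

private def Ufin (x : ℕ) : Finset (ℕ × ℕ) :=
  {p ∈ Finset.range (2 * x + 1) ×ˢ Finset.range (2 * x + 1) |
    p.1 ≤ p.2 ∧ p.1 % 2 = 1 ∧ p.2 % 2 = 1 ∧ p.1 ^ 2 + p.2 ^ 2 ≤ 2 * x}

private lemma mem_Ufin {x : ℕ} {p : ℕ × ℕ} :
    p ∈ Ufin x ↔ p.1 ≤ p.2 ∧ p.1 % 2 = 1 ∧ p.2 % 2 = 1 ∧ p.1 ^ 2 + p.2 ^ 2 ≤ 2 * x := by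
  unfold Ufin
  simp only [Finset.mem_filter, Finset.mem_product, Finset.mem_range]
  constructor
  · tauto
  · rintro ⟨h1, h2, h3, h4⟩
    have ha : p.1 ≤ p.1 ^ 2 := Nat.le_self_pow (by norm_num) _
    have hb : p.2 ≤ p.2 ^ 2 := Nat.le_self_pow (by norm_num) _
    exact ⟨⟨by omega, by omega⟩, h1, h2, h3, h4⟩

private lemma card_small_odds (x k : ℕ) (hk1 : 1 ≤ k) (hkx : (2 * k - 1) ^ 2 ≤ x) :
    #{v ∈ Finset.range (2 * x - (2 * k - 1) ^ 2 + 1) |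
        (v ^ 2 ≤ 2 * x - (2 * k - 1) ^ 2 ∧ v % 2 = 1) ∧ v < 2 * k - 1} = k - 1 := by
  rw [show k - 1 = #(Finset.Icc 1 (k - 1)) by rw [Nat.card_Icc]; omega]
  apply Finset.card_nbij' (fun v => (v + 1) / 2) (fun j => 2 * j - 1)
  · intro v hv
    simp only [Finset.mem_coe, Finset.mem_filter, Finset.mem_range] at hv
    rw [Finset.mem_coe, Finset.mem_Icc]
    dsimp only; omega
  · intro j hj
    rw [Finset.mem_coe, Finset.mem_Icc] at hj
    obtain ⟨hj1, hj2⟩ := hj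
    simp only [Finset.mem_coe, Finset.mem_filter, Finset.mem_range]
    have hle : 2 * j - 1 ≤ 2 * k - 1 := by omega
    have hsq : (2 * j - 1) ^ 2 ≤ (2 * k - 1) ^ 2 := Nat.pow_le_pow_left hle 2
    have hself : 2 * j - 1 ≤ (2 * j - 1) ^ 2 := Nat.le_self_pow (by norm_num) _
    refine ⟨by omega, ⟨by omega, by omega⟩, by omega⟩
  · intro v hv
    simp only [Finset.mem_coe, Finset.mem_filter, Finset.mem_range] at hv
    dsimp only; omega
  · intro j hj
    rw [Finset.mem_coe, Finset.mem_Icc] at hj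
    dsimp only; omega

private lemma fiber_card (x k : ℕ) (hk1 : 1 ≤ k) (hkx : (2 * k - 1) ^ 2 ≤ x) :
    #{p ∈ Ufin x | (p.1 + 1) / 2 = k} + (k - 1)
      = ⌊(1 + Real.sqrt ((2 * x - (2 * k - 1) ^ 2 : ℕ))) / 2⌋₊ := by
  set M := 2 * x - (2 * k - 1) ^ 2 with hM
  have himg : {p ∈ Ufin x | (p.1 + 1) / 2 = k}
      = Finset.image (fun v => (2 * k - 1, v))
          {v ∈ Finset.range (M + 1) | (v ^ 2 ≤ M ∧ v % 2 = 1) ∧ 2 * k - 1 ≤ v} := by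
    ext ⟨u, v⟩
    simp only [Finset.mem_filter, Finset.mem_image, Finset.mem_range, mem_Ufin,
      Prod.mk.injEq]
    constructor
    · rintro ⟨⟨huv, hu2, hv2, hs⟩, hk⟩
      have hu : u = 2 * k - 1 := by omega
      subst hu
      have hvself : v ≤ v ^ 2 := Nat.le_self_pow (by norm_num) _
      exact ⟨v, ⟨by omega, ⟨by omega, hv2⟩, huv⟩, rfl, rfl⟩
    · rintro ⟨w, ⟨hwr, ⟨hw2, hwodd⟩, hwge⟩, hu, hv⟩
      subst hu; subst hv
      exact ⟨⟨by omega, by omega, by omega, by omega⟩, by omega⟩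
  rw [himg, Finset.card_image_of_injective _ (fun a b h => by simpa using h)]
  have hsplit := Finset.card_filter_add_card_filter_not
    (s := {v ∈ Finset.range (M + 1) | v ^ 2 ≤ M ∧ v % 2 = 1})
    (p := fun v => v < 2 * k - 1)
  rw [← card_odd_sq_le M]
  rw [Finset.filter_filter, Finset.filter_filter] at hsplit
  have hlt := card_small_odds x k hk1 hkx
  rw [← hM] at hlt
  have hre : {v ∈ Finset.range (M + 1) | (v ^ 2 ≤ M ∧ v % 2 = 1) ∧ ¬v < 2 * k - 1}
      = {v ∈ Finset.range (M + 1) | (v ^ 2 ≤ M ∧ v % 2 = 1) ∧ 2 * k - 1 ≤ v} := by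
    apply Finset.filter_congr
    intro v _
    constructor
    · rintro ⟨h1, h2⟩; exact ⟨h1, by omega⟩
    · rintro ⟨h1, h2⟩; exact ⟨h1, by omega⟩
  rw [hre] at hsplit
  omega

private lemma sum_sub_one_Icc (K : ℕ) : ∑ k ∈ Finset.Icc 1 K, (k - 1) = K.choose 2 := by
  induction K with
  | zero => simp
  | succ n ih =>
    rw [Finset.sum_Icc_succ_top (by omega), ih]
    have h : (n + 1).choose 2 = n.choose 1 + n.choose 2 := Nat.choose_succ_succ n 1
    have h1 := Nat.choose_one_right n
    omega

private lemma part1 (x : ℕ) (hx : x % 4 = 1) :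
    (∑ i ∈ Finset.range ((x - 1) / 4 + 1), (twoSquaresQ (4 * i + 1) : ℤ)) =
      (∑ k ∈ Finset.Icc 1 ⌊(1 + Real.sqrt x) / 2⌋₊,
        (⌊(1 + Real.sqrt (2 * (x : ℝ) - (2 * (k : ℝ) - 1) ^ 2)) / 2⌋₊ : ℤ)) -
      (Nat.choose ⌊(1 + Real.sqrt x) / 2⌋₊ 2 : ℤ) := by
  set K := ⌊(1 + Real.sqrt x) / 2⌋₊ with hK
  have hnat : ∑ i ∈ Finset.range ((x - 1) / 4 + 1), twoSquaresQ (4 * i + 1)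
      = #(Ufin x) := by
    rw [sum_twoSquaresQ x hx, card_T_eq_card_U]; rfl
  have hfib : #(Ufin x) = ∑ k ∈ Finset.Icc 1 K, #{p ∈ Ufin x | (p.1 + 1) / 2 = k} := by
    apply Finset.card_eq_sum_card_fiberwise
    intro p hp
    rw [Finset.mem_coe, mem_Ufin] at hp
    obtain ⟨h1, h2, h3, h4⟩ := hp
    have hsq : p.1 ^ 2 ≤ p.2 ^ 2 := Nat.pow_le_pow_left h1 2
    have hk1 : 1 ≤ (p.1 + 1) / 2 := by omega
    rw [Finset.mem_coe, Finset.mem_Icc]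
    refine ⟨hk1, ?_⟩
    rw [hK, le_floor_iff_sq _ _ hk1]
    have he : 2 * ((p.1 + 1) / 2) - 1 = p.1 := by omega
    rw [he]
    omega
  have hterm : ∀ k ∈ Finset.Icc 1 K,
      (#{p ∈ Ufin x | (p.1 + 1) / 2 = k} : ℤ)
        = (⌊(1 + Real.sqrt (2 * (x : ℝ) - (2 * (k : ℝ) - 1) ^ 2)) / 2⌋₊ : ℤ)
          - ((k - 1 : ℕ) : ℤ) := by
    intro k hk
    rw [Finset.mem_Icc] at hk
    have hkx : (2 * k - 1) ^ 2 ≤ x := by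
      have := hk.2
      rw [hK] at this
      exact (le_floor_iff_sq x k hk.1).mp this
    have hcast : ((2 * x - (2 * k - 1) ^ 2 : ℕ) : ℝ)
        = 2 * (x : ℝ) - (2 * (k : ℝ) - 1) ^ 2 := by
      have h1 : (2 * k - 1) ^ 2 ≤ 2 * x := by omega
      have h2 : 1 ≤ 2 * k := by omega
      rw [Nat.cast_sub h1, Nat.cast_pow, Nat.cast_sub h2]
      push_cast; ring
    have hfc := fiber_card x k hk.1 hkx
    rw [hcast] at hfc
    omega
  rw [← Nat.cast_sum, hnat, hfib, Nat.cast_sum, Finset.sum_congr rfl hterm,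
    Finset.sum_sub_distrib, ← Nat.cast_sum _ (fun k => k - 1), sum_sub_one_Icc]



private lemma hasDeriv_H (x : ℕ) (hx : 1 ≤ x) (t : ℝ) (ht : t ∈ Set.Icc (1/2 : ℝ) ((Real.sqrt x + 1)/2)) :
    HasDerivAt (fun t : ℝ => (x : ℝ)/2 * Real.arcsin ((2*t-1)/Real.sqrt (2*x))
        + (2*t-1) * Real.sqrt (2*(x:ℝ) - (2*t-1)^2) / 4)
      (Real.sqrt (2*(x:ℝ) - (2*t-1)^2)) t := by
  have hx1 : (1:ℝ) ≤ (x:ℝ) := by exact_mod_cast hx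
  obtain ⟨ht1, ht2⟩ := ht
  have hu0 : 0 ≤ 2*t-1 := by linarith
  have husq : (2*t-1)^2 ≤ (x:ℝ) := by
    have h1 : 2*t-1 ≤ Real.sqrt x := by linarith
    have := Real.sqrt_nonneg (x:ℝ)
    nlinarith [Real.sq_sqrt (by positivity : (0:ℝ) ≤ (x:ℝ))]
  have hwpos : 0 < 2*(x:ℝ) - (2*t-1)^2 := by linarith
  have h2xpos : (0:ℝ) < 2*(x:ℝ) := by linarith
  have hs2x : (0:ℝ) < Real.sqrt (2*x) := Real.sqrt_pos.mpr h2xpos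
  have hsw : (0:ℝ) < Real.sqrt (2*(x:ℝ) - (2*t-1)^2) := Real.sqrt_pos.mpr hwpos
  set w := 2*(x:ℝ) - (2*t-1)^2 with hw
  -- arcsin argument
  set a := (2*t-1)/Real.sqrt (2*x) with ha
  have ha0 : 0 ≤ a := div_nonneg hu0 hs2x.le
  have ha1 : a^2 < 1 := by
    rw [ha, div_pow, Real.sq_sqrt h2xpos.le]
    rw [div_lt_one h2xpos]
    linarith
  have halt : a < 1 := by nlinarith
  have hane1 : a ≠ 1 := ne_of_lt halt
  have hanem1 : a ≠ -1 := by intro h; rw [h] at ha0; linarith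
  have hone_sub : 1 - a^2 = w / (2*x) := by
    rw [ha, div_pow, Real.sq_sqrt h2xpos.le]
    field_simp; exact hw.symm
  have hsqrt_one_sub : Real.sqrt (1 - a^2) = Real.sqrt w / Real.sqrt (2*x) := by
    rw [hone_sub, Real.sqrt_div hwpos.le]
  -- derivative of u
  have hu : HasDerivAt (fun t : ℝ => 2*t-1) 2 t := by
    simpa using ((hasDerivAt_id t).const_mul (2:ℝ)).sub_const 1
  have hA : HasDerivAt (fun s : ℝ => (2*s-1)/Real.sqrt (2*x)) (2/Real.sqrt (2*x)) t :=
    hu.div_const _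
  have harcsin : HasDerivAt (fun s : ℝ => Real.arcsin ((2*s-1)/Real.sqrt (2*x)))
      ((1 / Real.sqrt (1 - a^2)) * (2/Real.sqrt (2*x))) t :=
    by have := (Real.hasDerivAt_arcsin hanem1 hane1).comp t hA; exact this
  have hwd : HasDerivAt (fun s : ℝ => 2*(x:ℝ) - (2*s-1)^2) (-(4*(2*t-1))) t := by
    have h1 := (hu.pow 2).const_sub (2*(x:ℝ))
    refine h1.congr_deriv ?_
    ring
  have hsq : HasDerivAt (fun s : ℝ => Real.sqrt (2*(x:ℝ) - (2*s-1)^2))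
      (-(4*(2*t-1)) / (2 * Real.sqrt w)) t := hwd.sqrt (by rw [← hw]; positivity)
  have hprod : HasDerivAt (fun s : ℝ => (2*s-1) * Real.sqrt (2*(x:ℝ) - (2*s-1)^2))
      (2 * Real.sqrt w + (2*t-1) * (-(4*(2*t-1)) / (2 * Real.sqrt w))) t := by
    have := hu.mul hsq
    exact this
  have htotal := ((harcsin.const_mul ((x:ℝ)/2)).add (hprod.div_const 4))
  refine htotal.congr_deriv (Eq.symm ?_)
  rw [hsqrt_one_sub]
  have hww : Real.sqrt w ^ 2 = w := Real.sq_sqrt hwpos.le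
  have h2x2 : Real.sqrt (2*(x:ℝ)) ^ 2 = 2*(x:ℝ) := Real.sq_sqrt h2xpos.le
  field_simp
  linear_combination 4 * (hww.trans hw)

private lemma integral_h (x : ℕ) (hx : 1 ≤ x) :
    ∫ t in (1/2 : ℝ)..((Real.sqrt x + 1)/2), Real.sqrt (2*(x:ℝ) - (2*t-1)^2)
      = π * x / 8 + x / 4 := by
  have hsnn : (0:ℝ) ≤ Real.sqrt x := Real.sqrt_nonneg _
  have hle : (1/2 : ℝ) ≤ (Real.sqrt x + 1)/2 := by linarith
  have hcont : Continuous (fun t : ℝ => Real.sqrt (2*(x:ℝ) - (2*t-1)^2)) := by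
    fun_prop
  have key := intervalIntegral.integral_eq_sub_of_hasDerivAt
      (f := fun t : ℝ => (x : ℝ)/2 * Real.arcsin ((2*t-1)/Real.sqrt (2*x))
        + (2*t-1) * Real.sqrt (2*(x:ℝ) - (2*t-1)^2) / 4)
      (f' := fun t : ℝ => Real.sqrt (2*(x:ℝ) - (2*t-1)^2))
      (fun t ht => hasDeriv_H x hx t (by rwa [Set.uIcc_of_le hle] at ht))
      (hcont.intervalIntegrable _ _)
  rw [key]
  have e2 : 2*((Real.sqrt x + 1)/2) - 1 = Real.sqrt x := by ring
  have e1 : 2*((1:ℝ)/2) - 1 = 0 := by norm_num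
  rw [e2, e1]
  have hxpos : (0:ℝ) < (x:ℝ) := by exact_mod_cast Nat.pos_of_ne_zero (by omega)
  have hsx : Real.sqrt (x:ℝ) ^ 2 = (x:ℝ) := Real.sq_sqrt (le_of_lt hxpos)
  have hs2 : Real.sqrt ((x:ℝ)) * Real.sqrt ((x:ℝ)) = (x:ℝ) := Real.mul_self_sqrt (le_of_lt hxpos)
  have harc : Real.arcsin (Real.sqrt x / Real.sqrt (2*x)) = π/4 := by
    have h2 : Real.sqrt (2*(x:ℝ)) = Real.sqrt 2 * Real.sqrt x := Real.sqrt_mul (by norm_num) _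
    have hsxpos : (0:ℝ) < Real.sqrt x := Real.sqrt_pos.mpr hxpos
    have h22 : Real.sqrt 2 * Real.sqrt 2 = 2 := Real.mul_self_sqrt (by norm_num)
    have hs2pos : (0:ℝ) < Real.sqrt 2 := Real.sqrt_pos.mpr (by norm_num)
    have h3 : Real.sqrt x / Real.sqrt (2*x) = Real.sqrt 2 / 2 := by
      rw [h2]
      rw [div_eq_div_iff (by positivity) (by norm_num)]
      nlinarith
    rw [h3, ← Real.sin_pi_div_four, Real.arcsin_sin (by linarith [Real.pi_pos]) (by linarith [Real.pi_pos])]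
  rw [hsx, harc]
  simp only [zero_div, Real.arcsin_zero, mul_zero, zero_mul]
  rw [show 2*(x:ℝ) - (x:ℝ) = (x:ℝ) by ring, hs2]
  ring

private lemma sum_est (x : ℕ) (hx : 100 ≤ x) :
    |(∑ k ∈ Finset.Icc 1 ⌊(1 + Real.sqrt x) / 2⌋₊,
        Real.sqrt (2 * (x:ℝ) - (2 * (k:ℝ) - 1) ^ 2)) - (π * x / 8 + x / 4)|
      ≤ 5 * Real.sqrt x := by
  set h : ℝ → ℝ := fun t => Real.sqrt (2 * (x:ℝ) - (2 * t - 1) ^ 2) with hh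
  set s : ℝ := Real.sqrt x with hs
  have hsnn : (0:ℝ) ≤ s := Real.sqrt_nonneg _
  have hs10 : (10:ℝ) ≤ s := by
    rw [hs, show (10:ℝ) = Real.sqrt 100 by
      rw [show (100:ℝ) = 10^2 by norm_num, Real.sqrt_sq (by norm_num)]]
    exact Real.sqrt_le_sqrt (by exact_mod_cast hx)
  set K := ⌊(1 + s) / 2⌋₊ with hK
  have hK1 : (K:ℝ) ≤ (1 + s) / 2 := Nat.floor_le (by positivity)
  have hK2 : (1 + s) / 2 < (K:ℝ) + 1 := Nat.lt_floor_add_one _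
  have hKge : 5 ≤ K := by
    have h4 : (4:ℝ) < (K:ℝ) := by nlinarith
    have h4' : 4 < K := by exact_mod_cast h4
    omega
  have hx1 : (1:ℕ) ≤ x := by omega
  -- basic bounds on h
  have hbound : ∀ t : ℝ, h t ≤ Real.sqrt (2 * x) := by
    intro t
    apply Real.sqrt_le_sqrt
    nlinarith [sq_nonneg (2 * t - 1)]
  have hnonneg : ∀ t : ℝ, 0 ≤ h t := fun t => Real.sqrt_nonneg _
  have hanti : ∀ C : ℝ, AntitoneOn h (Set.Icc (1:ℝ) C) := by
    intro C a ha b hb hab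
    apply Real.sqrt_le_sqrt
    have h1 : (1:ℝ) ≤ a := ha.1
    have h2 : (2 * a - 1) ^ 2 ≤ (2 * b - 1) ^ 2 :=
      pow_le_pow_left₀ (by linarith) (by linarith) 2
    linarith
  have hcont : Continuous h := by rw [hh]; fun_prop
  have hintg : ∀ a b : ℝ, IntervalIntegrable h MeasureTheory.volume a b :=
    fun a b => hcont.intervalIntegrable a b
  have hs2x : Real.sqrt (2 * x) ≤ 1.5 * s := by
    rw [show (2:ℝ) * x = 2 * (x:ℝ) by ring, Real.sqrt_mul (by norm_num) (x:ℝ), ← hs]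
    have : Real.sqrt 2 ≤ 1.5 := by
      rw [show (1.5:ℝ) = Real.sqrt (1.5^2) by rw [Real.sqrt_sq]; norm_num]
      exact Real.sqrt_le_sqrt (by norm_num)
    nlinarith
  have hs2xnn : (0:ℝ) ≤ Real.sqrt (2 * x) := Real.sqrt_nonneg _
  -- the exact integral
  have hI : ∫ t in (1/2 : ℝ)..((s + 1)/2), h t = π * x / 8 + x / 4 := by
    rw [hh, hs]
    exact integral_h x hx1
  -- integral from 1 to b estimate
  have hint : ∀ b : ℝ, |b - (s + 1)/2| ≤ 1 →
      |(∫ t in (1:ℝ)..b, h t) - (π * x / 8 + x / 4)| ≤ 2 * Real.sqrt (2 * x) := by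
    intro b hb
    have hsplit1 : (∫ t in (1/2 : ℝ)..(1:ℝ), h t) + (∫ t in (1:ℝ)..b, h t)
        = ∫ t in (1/2 : ℝ)..b, h t :=
      intervalIntegral.integral_add_adjacent_intervals (hintg _ _) (hintg _ _)
    have hsplit2 : (∫ t in (1/2 : ℝ)..((s+1)/2), h t) + (∫ t in ((s+1)/2)..b, h t)
        = ∫ t in (1/2 : ℝ)..b, h t :=
      intervalIntegral.integral_add_adjacent_intervals (hintg _ _) (hintg _ _)
    have hball : ∀ c d : ℝ, |∫ t in c..d, h t| ≤ Real.sqrt (2 * x) * |d - c| := by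
      intro c d
      rw [← Real.norm_eq_abs (∫ t in c..d, h t)]
      apply intervalIntegral.norm_integral_le_of_norm_le_const
      intro t _
      rw [Real.norm_eq_abs, abs_of_nonneg (hnonneg t)]
      exact hbound t
    have hb1 : |∫ t in (1/2 : ℝ)..(1:ℝ), h t| ≤ Real.sqrt (2 * x) * (1/2) := by
      have := hball (1/2) 1
      rw [show |(1:ℝ) - 1/2| = 1/2 by norm_num] at this
      exact this
    have hb2 : |∫ t in ((s+1)/2)..b, h t| ≤ Real.sqrt (2 * x) := by
      have := hball ((s+1)/2) b
      have h2 : Real.sqrt (2 * x) * |b - (s+1)/2| ≤ Real.sqrt (2 * x) * 1 :=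
        mul_le_mul_of_nonneg_left hb hs2xnn
      linarith
    have e : (∫ t in (1:ℝ)..b, h t) - (π * x / 8 + x / 4)
        = (∫ t in ((s+1)/2)..b, h t) - (∫ t in (1/2 : ℝ)..(1:ℝ), h t) := by
      rw [← hI]; linarith
    rw [e]
    have htri := abs_sub (∫ t in ((s+1)/2)..b, h t) (∫ t in (1/2 : ℝ)..(1:ℝ), h t)
    linarith
  -- upper bound for the sum
  have hcastK1 : ((K - 1 : ℕ) : ℝ) = (K:ℝ) - 1 := by
    have : 1 ≤ K := by omega
    push_cast [this]; ring
  have hupper : (∑ k ∈ Finset.Icc 1 K, h (k:ℝ))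
      ≤ h 1 + ∫ t in (1:ℝ)..(1 + ((K - 1 : ℕ) : ℝ)), h t := by
    have hsplit : Finset.Icc 1 K = insert 1 (Finset.Icc 2 K) := by
      ext j; simp only [Finset.mem_Icc, Finset.mem_insert]; omega
    rw [hsplit, Finset.sum_insert (by simp)]
    have htail : ∑ k ∈ Finset.Icc 2 K, h (k:ℝ)
        = ∑ i ∈ Finset.range (K - 1), h (1 + ((i + 1 : ℕ) : ℝ)) := by
      rw [← Finset.Ico_add_one_right_eq_Icc, Finset.sum_Ico_eq_sum_range]
      have : K + 1 - 2 = K - 1 := by omega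
      rw [this]
      apply Finset.sum_congr rfl
      intro i _
      congr 1
      push_cast; ring
    rw [htail]
    have := AntitoneOn.sum_le_integral (x₀ := (1:ℝ)) (a := K - 1) (f := h)
      (by exact hanti _)
    simp only [Nat.cast_one]
    linarith [this]
  -- lower bound for the sum
  have hlower : (∫ t in (1:ℝ)..(1 + (K : ℝ)), h t) ≤ ∑ k ∈ Finset.Icc 1 K, h (k:ℝ) := by
    have hS1 : ∑ k ∈ Finset.Icc 1 K, h (k:ℝ) = ∑ i ∈ Finset.range K, h (1 + (i : ℕ)) := by
      rw [← Finset.Ico_add_one_right_eq_Icc, Finset.sum_Ico_eq_sum_range]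
      have : K + 1 - 1 = K := by omega
      rw [this]
      apply Finset.sum_congr rfl
      intro i _
      congr 1
      push_cast; ring
    rw [hS1]
    have := AntitoneOn.integral_le_sum (x₀ := (1:ℝ)) (a := K) (f := h) (hanti _)
    exact this
  -- combine
  have hb1 : |(1 + ((K - 1 : ℕ) : ℝ)) - (s + 1)/2| ≤ 1 := by
    rw [hcastK1, abs_le]; constructor <;> nlinarith
  have hb2 : |(1 + (K : ℝ)) - (s + 1)/2| ≤ 1 := by
    rw [abs_le]; constructor <;> nlinarith
  have hi1 := hint _ hb1
  have hi2 := hint _ hb2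
  have hh1 : h 1 ≤ Real.sqrt (2 * x) := hbound 1
  rw [abs_le] at hi1 hi2 ⊢
  constructor
  · linarith [hi2.1, hlower]
  · linarith [hi1.2, hupper, hh1]


private lemma est (x : ℕ) (hx4 : x % 4 = 1) (hx : 100 ≤ x) :
    |(∑ i ∈ Finset.range ((x - 1) / 4 + 1), (twoSquaresQ (4 * i + 1) : ℝ))
      - π / 16 * x| ≤ 10 * Real.sqrt x := by
  have hid := part1 x hx4
  have hidR : (∑ i ∈ Finset.range ((x - 1) / 4 + 1), (twoSquaresQ (4 * i + 1) : ℝ))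
      = (∑ k ∈ Finset.Icc 1 ⌊(1 + Real.sqrt x) / 2⌋₊,
          (⌊(1 + Real.sqrt (2 * (x:ℝ) - (2 * (k:ℝ) - 1) ^ 2)) / 2⌋₊ : ℝ))
        - ((⌊(1 + Real.sqrt x) / 2⌋₊).choose 2 : ℝ) := by exact_mod_cast hid
  set K := ⌊(1 + Real.sqrt x) / 2⌋₊ with hK
  set s := Real.sqrt x with hs
  have hsnn : (0:ℝ) ≤ s := Real.sqrt_nonneg _
  have hs10 : (10:ℝ) ≤ s := by
    rw [hs, show (10:ℝ) = Real.sqrt 100 by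
      rw [show (100:ℝ) = 10^2 by norm_num, Real.sqrt_sq (by norm_num)]]
    exact Real.sqrt_le_sqrt (by exact_mod_cast hx)
  have hK1 : (K:ℝ) ≤ (1 + s) / 2 := Nat.floor_le (by positivity)
  have hK2 : (1 + s) / 2 < (K:ℝ) + 1 := Nat.lt_floor_add_one _
  have hKge1 : (1:ℝ) ≤ (K:ℝ) := by nlinarith
  have hxs : s ^ 2 = (x:ℝ) := Real.sq_sqrt (by positivity)
  have hA : ∀ k ∈ Finset.Icc 1 K,
      |(⌊(1 + Real.sqrt (2 * (x:ℝ) - (2 * (k:ℝ) - 1) ^ 2)) / 2⌋₊ : ℝ)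
        - Real.sqrt (2 * (x:ℝ) - (2 * (k:ℝ) - 1) ^ 2) / 2| ≤ 1/2 := by
    intro k _
    set z := (1 + Real.sqrt (2 * (x:ℝ) - (2 * (k:ℝ) - 1) ^ 2)) / 2 with hz
    have hznn : (0:ℝ) ≤ z := by positivity
    have h1 : (⌊z⌋₊ : ℝ) ≤ z := Nat.floor_le hznn
    have h2 : z < (⌊z⌋₊ : ℝ) + 1 := Nat.lt_floor_add_one z
    rw [abs_le]
    constructor <;> linarith
  have hsum1 : |(∑ k ∈ Finset.Icc 1 K,
          (⌊(1 + Real.sqrt (2 * (x:ℝ) - (2 * (k:ℝ) - 1) ^ 2)) / 2⌋₊ : ℝ))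
        - (∑ k ∈ Finset.Icc 1 K, Real.sqrt (2 * (x:ℝ) - (2 * (k:ℝ) - 1) ^ 2)) / 2|
      ≤ (K:ℝ) / 2 := by
    rw [Finset.sum_div, ← Finset.sum_sub_distrib]
    calc |∑ k ∈ Finset.Icc 1 K, ((⌊(1 + Real.sqrt (2 * (x:ℝ) - (2 * (k:ℝ) - 1) ^ 2)) / 2⌋₊ : ℝ)
            - Real.sqrt (2 * (x:ℝ) - (2 * (k:ℝ) - 1) ^ 2) / 2)|
        ≤ ∑ k ∈ Finset.Icc 1 K, |(⌊(1 + Real.sqrt (2 * (x:ℝ) - (2 * (k:ℝ) - 1) ^ 2)) / 2⌋₊ : ℝ)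
            - Real.sqrt (2 * (x:ℝ) - (2 * (k:ℝ) - 1) ^ 2) / 2| :=
          Finset.abs_sum_le_sum_abs _ _
      _ ≤ ∑ _k ∈ Finset.Icc 1 K, (1/2 : ℝ) := Finset.sum_le_sum hA
      _ = (K:ℝ) / 2 := by
          rw [Finset.sum_const, Nat.card_Icc, nsmul_eq_mul]
          have : K + 1 - 1 = K := by omega
          rw [this]; ring
  have hsum2 := sum_est x hx
  rw [← hK, ← hs] at hsum2
  have hchoose : ((K.choose 2 : ℕ) : ℝ) = (K:ℝ) * ((K:ℝ) - 1) / 2 := Nat.cast_choose_two (K := ℝ) K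
  have hc : |(K:ℝ) * ((K:ℝ) - 1) / 2 - (x:ℝ) / 8| ≤ s := by
    rw [abs_le]
    constructor <;> nlinarith [hK1, hK2, hKge1, hxs, hs10]
  rw [hidR, hchoose]
  rw [abs_le] at hsum1 hsum2 hc ⊢
  constructor <;> linarith [hsum1.1, hsum1.2, hsum2.1, hsum2.2, hc.1, hc.2, hK1, hsnn]

theorem two_squares_partial_sums :
    (∀ x : ℕ, x % 4 = 1 →
      (∑ i ∈ Finset.range ((x - 1) / 4 + 1), (twoSquaresQ (4 * i + 1) : ℤ)) =
        (∑ k ∈ Finset.Icc 1 ⌊(1 + Real.sqrt x) / 2⌋₊,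
          (⌊(1 + Real.sqrt (2 * (x : ℝ) - (2 * (k : ℝ) - 1) ^ 2)) / 2⌋₊ : ℤ)) -
        (Nat.choose ⌊(1 + Real.sqrt x) / 2⌋₊ 2 : ℤ)) ∧
    (fun x : ℕ =>
        (∑ i ∈ Finset.range ((x - 1) / 4 + 1), (twoSquaresQ (4 * i + 1) : ℝ)) -
        Real.pi / 16 * x)
      =O[atTop ⊓ 𝓟 {x : ℕ | x % 4 = 1}] (fun x : ℕ => Real.sqrt x) := by
  constructor
  · exact fun x hx => part1 x hx
  · rw [Asymptotics.isBigO_iff]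
    refine ⟨10, ?_⟩
    rw [Filter.eventually_inf_principal]
    filter_upwards [Filter.eventually_ge_atTop 100] with x hx hmem
    have hmem' : x % 4 = 1 := hmem
    have h := est x hmem' hx
    rw [Real.norm_eq_abs, Real.norm_eq_abs, abs_of_nonneg (Real.sqrt_nonneg _)]
    exact h
end
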